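/- State-independence of the dual feasible set: under Restriction 2 (either all R_j ≻ 0, or F_u(x) ≡ B constant), if (ν̂*, λ̂_c*, λ̂_β*, λ̂_α*) is dual-optimal for the one-stage problem with parameter x̂, then for every other parameter x̄ the same multipliers are dual-feasible, and hence the function g(x) := φ(x)ᵀλ̂_β* − h(x)ᵀλ̂_c* + f_x(x)ᵀν̂* + ζ₁(ν̂*,λ̂_α*) + ζ₂(x,ν̂*,λ̂_c*,λ̂_β*) satisfies g(x̄) ≤ J_D(x̄) ≤ J_P(x̄) for all x̄ ∈ X. -/

import Mathlib

open Matrix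

/-- The dual objective of the parametric one-stage problem:
`φ(x)ᵀlamb − h(x)ᵀlamc + f_x(x)ᵀν + ζ₁(ν,lama) + ζ₂(x,ν,lamc,lamb)`, where `ζ₁` and
`ζ₂` are the infima of the Lagrangian over the successor state `x₊` and the
input `u ∈ U` respectively. -/
noncomputable def dualObj {n m nc Jn Ic : ℕ} (Uset : Set (Fin m → ℝ))
    (fx : (Fin n → ℝ) → Fin n → ℝ) (Fu : (Fin n → ℝ) → Matrix (Fin n) (Fin m) ℝ)
    (E : Matrix (Fin nc) (Fin m) ℝ) (hb : (Fin n → ℝ) → Fin nc → ℝ)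
    (φ : Fin Jn → (Fin n → ℝ) → ℝ) (r : Fin Jn → Fin m → ℝ)
    (R : Fin Jn → Matrix (Fin m) (Fin m) ℝ) (g : Fin Ic → (Fin n → ℝ) → ℝ)
    (x ν : Fin n → ℝ) (lamc : Fin nc → ℝ) (lamb : Fin Jn → ℝ) (lama : Fin Ic → ℝ) : ℝ :=
  (∑ j, lamb j * φ j x) - (lamc ⬝ᵥ hb x) + (ν ⬝ᵥ fx x)
  + sInf {v : ℝ | ∃ xp : Fin n → ℝ, v = -(ν ⬝ᵥ xp) + ∑ i, lama i * g i xp}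
  + sInf {v : ℝ | ∃ u ∈ Uset, v =
      (ν ⬝ᵥ (Fu x).mulVec u + lamc ⬝ᵥ E.mulVec u + ∑ j, lamb j * (r j ⬝ᵥ u))
      + (1 / 2) * (u ⬝ᵥ (∑ j, lamb j • R j).mulVec u)}

/-- Dual feasibility for the one-stage problem with parameter `x`: the explicit
constraints `Lᵀlamb = 1`, `1ᵀlama = γ`, nonnegativity, together with the implicit
constraints that the Lagrangian infima `ζ₁` and `ζ₂` be bounded below. -/
def dualFeas {n m nc Jn Ic K : ℕ} (Uset : Set (Fin m → ℝ))
    (Fu : (Fin n → ℝ) → Matrix (Fin n) (Fin m) ℝ)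
    (E : Matrix (Fin nc) (Fin m) ℝ)
    (r : Fin Jn → Fin m → ℝ) (R : Fin Jn → Matrix (Fin m) (Fin m) ℝ)
    (g : Fin Ic → (Fin n → ℝ) → ℝ) (γ : ℝ) (kof : Fin Jn → Fin K)
    (x ν : Fin n → ℝ) (lamc : Fin nc → ℝ) (lamb : Fin Jn → ℝ) (lama : Fin Ic → ℝ) : Prop :=
  (∀ k, ∑ j ∈ Finset.univ.filter (fun j => kof j = k), lamb j = 1) ∧
  (∑ i, lama i = γ) ∧
  (∀ c, 0 ≤ lamc c) ∧ (∀ j, 0 ≤ lamb j) ∧ (∀ i, 0 ≤ lama i) ∧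
  BddBelow {v : ℝ | ∃ xp : Fin n → ℝ, v = -(ν ⬝ᵥ xp) + ∑ i, lama i * g i xp} ∧
  BddBelow {v : ℝ | ∃ u ∈ Uset, v =
      (ν ⬝ᵥ (Fu x).mulVec u + lamc ⬝ᵥ E.mulVec u + ∑ j, lamb j * (r j ⬝ᵥ u))
      + (1 / 2) * (u ⬝ᵥ (∑ j, lamb j • R j).mulVec u)}

/-- The set of primal objective values of the one-stage problem with
parameter `x` (epigraph form, successor state eliminated). -/
def primalSet {n m nc Jn Ic K : ℕ} (Uset : Set (Fin m → ℝ))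
    (fx : (Fin n → ℝ) → Fin n → ℝ) (Fu : (Fin n → ℝ) → Matrix (Fin n) (Fin m) ℝ)
    (E : Matrix (Fin nc) (Fin m) ℝ) (hb : (Fin n → ℝ) → Fin nc → ℝ)
    (φ : Fin Jn → (Fin n → ℝ) → ℝ) (r : Fin Jn → Fin m → ℝ)
    (R : Fin Jn → Matrix (Fin m) (Fin m) ℝ) (g : Fin Ic → (Fin n → ℝ) → ℝ)
    (γ : ℝ) (kof : Fin Jn → Fin K) (x : Fin n → ℝ) : Set ℝ :=
  {c : ℝ | ∃ u ∈ Uset, ∃ β : Fin K → ℝ, ∃ α : ℝ,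
    (∀ cc, E.mulVec u cc ≤ hb x cc) ∧
    (∀ j, φ j x + r j ⬝ᵥ u + (1 / 2) * (u ⬝ᵥ (R j).mulVec u) ≤ β (kof j)) ∧
    (∀ i, g i (fx x + (Fu x).mulVec u) ≤ α) ∧
    c = (∑ k, β k) + γ * α}



lemma sum_mulVec' {m ι : ℕ} (M : Fin ι → Matrix (Fin m) (Fin m) ℝ) (y : Fin m → ℝ) :
    (∑ j, M j) *ᵥ y = ∑ j, (M j) *ᵥ y := by
  funext i
  simp only [Matrix.mulVec, dotProduct, Matrix.sum_apply, Finset.sum_apply,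
    Finset.sum_mul]
  rw [Finset.sum_comm]

lemma dot_sum' {m ι : ℕ} (x : Fin m → ℝ) (v : Fin ι → Fin m → ℝ) :
    x ⬝ᵥ (∑ j, v j) = ∑ j, x ⬝ᵥ v j := by
  simp only [dotProduct, Finset.sum_apply, Finset.mul_sum]
  rw [Finset.sum_comm]

lemma dot_sum_smul_mulVec {m ι : ℕ} (c : Fin ι → ℝ) (A : Fin ι → Matrix (Fin m) (Fin m) ℝ)
    (x y : Fin m → ℝ) :
    x ⬝ᵥ (∑ j, c j • A j) *ᵥ y = ∑ j, c j * (x ⬝ᵥ (A j) *ᵥ y) := by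
  rw [sum_mulVec', dot_sum']
  exact Finset.sum_congr rfl fun j _ => by
    rw [smul_mulVec, dotProduct_smul, smul_eq_mul]

lemma sum_smul_dot {m ι : ℕ} (c : Fin ι → ℝ) (r : Fin ι → Fin m → ℝ) (u : Fin m → ℝ) :
    (∑ j, c j • r j) ⬝ᵥ u = ∑ j, c j * (r j ⬝ᵥ u) := by
  rw [show (∑ j, c j • r j) ⬝ᵥ u = u ⬝ᵥ (∑ j, c j • r j) from dotProduct_comm _ _,
    dot_sum']
  exact Finset.sum_congr rfl fun j _ => by
    rw [dotProduct_smul, smul_eq_mul, dotProduct_comm]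

lemma herm_transpose {m : ℕ} (M : Matrix (Fin m) (Fin m) ℝ) (h : M.IsHermitian) : Mᵀ = M := by
  funext i j
  have := congrFun (congrFun h.eq i) j
  simpa [Matrix.conjTranspose_apply] using this

lemma sum_smul_posDef {m ι : ℕ} (R : Fin ι → Matrix (Fin m) (Fin m) ℝ)
    (hR : ∀ j, (R j).PosDef) (lamb : Fin ι → ℝ) (h0 : ∀ j, 0 ≤ lamb j)
    (j0 : Fin ι) (hj0 : 0 < lamb j0) : (∑ j, lamb j • R j).PosDef := by
  refine Matrix.PosDef.of_dotProduct_mulVec_pos ?_ ?_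
  · show _ = _
    rw [Matrix.conjTranspose_sum]
    exact Finset.sum_congr rfl fun j _ => by
      rw [Matrix.conjTranspose_smul, (hR j).isHermitian.eq]; simp
  · intro x hx
    have hsx : star x = x := by funext i; simp
    rw [hsx, dot_sum_smul_mulVec]
    refine Finset.sum_pos' (fun j _ => ?_) ⟨j0, Finset.mem_univ _, ?_⟩
    · have := (hR j).posSemidef.dotProduct_mulVec_nonneg x
      rw [hsx] at this
      exact mul_nonneg (h0 j) this
    · have := (hR j0).dotProduct_mulVec_pos hx
      rw [hsx] at this
      exact mul_pos hj0 this

lemma quad_lb {m : ℕ} (M : Matrix (Fin m) (Fin m) ℝ) (hM : M.PosDef) (a u : Fin m → ℝ) :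
    -(1/2) * (a ⬝ᵥ M⁻¹ *ᵥ a) ≤ a ⬝ᵥ u + (1/2) * (u ⬝ᵥ M *ᵥ u) := by
  set w : Fin m → ℝ := M⁻¹ *ᵥ a with hw
  have hMw : M *ᵥ w = a := by
    rw [hw, Matrix.mulVec_mulVec, Matrix.mul_nonsing_inv _ (isUnit_iff_isUnit_det _ |>.1 hM.isUnit),
      Matrix.one_mulVec]
  have hsym : Mᵀ = M := herm_transpose _ hM.isHermitian
  have h1 : u ⬝ᵥ M *ᵥ w = u ⬝ᵥ a := by rw [hMw]
  have h2 : w ⬝ᵥ M *ᵥ u = a ⬝ᵥ u := by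
    rw [Matrix.dotProduct_mulVec, ← Matrix.mulVec_transpose, hsym, hMw]
  have h3 : w ⬝ᵥ M *ᵥ w = a ⬝ᵥ w := by
    rw [Matrix.dotProduct_mulVec, ← Matrix.mulVec_transpose, hsym, hMw]
  have hpos : 0 ≤ (u + w) ⬝ᵥ M *ᵥ (u + w) := by
    have := hM.posSemidef.dotProduct_mulVec_nonneg (u + w)
    have hs : star (u + w) = u + w := by funext i; simp
    rwa [hs] at this
  have hexp : (u + w) ⬝ᵥ M *ᵥ (u + w)
      = u ⬝ᵥ M *ᵥ u + u ⬝ᵥ a + a ⬝ᵥ u + a ⬝ᵥ w := by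
    rw [Matrix.mulVec_add, dotProduct_add, add_dotProduct,
      add_dotProduct, h1, h2, h3]
    ring
  have hcomm : u ⬝ᵥ a = a ⬝ᵥ u := dotProduct_comm _ _
  rw [hw] at hexp hpos ⊢
  nlinarith [hpos, hexp, hcomm]

/-- state-independence of the dual feasible set under
Restriction 2 (all `R_j ≻ 0`, or `F_u(x) ≡ B` constant): if the multipliers
`(ν̂*, λ̂c*, λ̂β*, λ̂α*)` are dual-optimal for the one-stage problem with
parameter `x̂`, then for every other parameter `x̄` they remain dual-feasible,
and the function `g(x) = φ(x)ᵀλ̂β* − h(x)ᵀλ̂c* + f_x(x)ᵀν̂* + ζ₁ + ζ₂(x)`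
satisfies `g(x̄) ≤ J_D(x̄) ≤ J_P(x̄)` (here expressed as: `g(x̄)` is a
dual-feasible objective value, hence at most the dual optimum, and it lower
bounds every primal objective value). -/
theorem stmt13 {n m nc Jn Ic K : ℕ} (hK : 0 < K) (Uset : Set (Fin m → ℝ))
    (fx : (Fin n → ℝ) → Fin n → ℝ) (Fu : (Fin n → ℝ) → Matrix (Fin n) (Fin m) ℝ)
    (E : Matrix (Fin nc) (Fin m) ℝ) (hb : (Fin n → ℝ) → Fin nc → ℝ)
    (φ : Fin Jn → (Fin n → ℝ) → ℝ) (r : Fin Jn → Fin m → ℝ)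
    (R : Fin Jn → Matrix (Fin m) (Fin m) ℝ) (g : Fin Ic → (Fin n → ℝ) → ℝ)
    (γ : ℝ) (hγ0 : 0 < γ) (hγ1 : γ ≤ 1) (kof : Fin Jn → Fin K)
    (hres : (∀ j, (R j).PosDef) ∨ (∃ B, ∀ x, Fu x = B))
    (xhat ν : Fin n → ℝ) (lamc : Fin nc → ℝ) (lamb : Fin Jn → ℝ) (lama : Fin Ic → ℝ)
    (hfeas : dualFeas Uset Fu E r R g γ kof xhat ν lamc lamb lama)
    (hopt : dualObj Uset fx Fu E hb φ r R g xhat ν lamc lamb lama ∈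
      upperBounds {c : ℝ | ∃ ν' lamc' lamb' lama',
        dualFeas Uset Fu E r R g γ kof xhat ν' lamc' lamb' lama' ∧
        c = dualObj Uset fx Fu E hb φ r R g xhat ν' lamc' lamb' lama'}) :
    ∀ xbar : Fin n → ℝ,
      dualFeas Uset Fu E r R g γ kof xbar ν lamc lamb lama ∧
      dualObj Uset fx Fu E hb φ r R g xbar ν lamc lamb lama ∈
        lowerBounds (primalSet Uset fx Fu E hb φ r R g γ kof xbar) := by
  intro xbar
  obtain ⟨hL, hγs, hc0, hb0, ha0, hbdd1, hbdd2⟩ := hfeas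
  have hbdd2' : BddBelow {v : ℝ | ∃ u ∈ Uset, v =
      (ν ⬝ᵥ (Fu xbar).mulVec u + lamc ⬝ᵥ E.mulVec u + ∑ j, lamb j * (r j ⬝ᵥ u))
      + (1 / 2) * (u ⬝ᵥ (∑ j, lamb j • R j).mulVec u)} := by
    rcases hres with hPD | ⟨B, hB⟩
    · have hk : ∃ j, 0 < lamb j := by
        by_contra h
        push_neg at h
        have h1 := hL ⟨0, hK⟩
        rw [Finset.sum_eq_zero (fun j _ => le_antisymm (h j) (hb0 j))] at h1
        norm_num at h1
      obtain ⟨j0, hj0⟩ := hk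
      have hM : (∑ j, lamb j • R j).PosDef := sum_smul_posDef R hPD lamb hb0 j0 hj0
      set a : Fin m → ℝ := ν ᵥ* (Fu xbar) + lamc ᵥ* E + ∑ j, lamb j • r j with ha
      refine ⟨-(1/2) * (a ⬝ᵥ (∑ j, lamb j • R j)⁻¹ *ᵥ a), ?_⟩
      rintro v ⟨u, hu, rfl⟩
      have hlin : ν ⬝ᵥ (Fu xbar) *ᵥ u + lamc ⬝ᵥ E *ᵥ u + ∑ j, lamb j * (r j ⬝ᵥ u)
          = a ⬝ᵥ u := by
        rw [ha, add_dotProduct, add_dotProduct, sum_smul_dot,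
          Matrix.dotProduct_mulVec ν, Matrix.dotProduct_mulVec lamc]
      rw [hlin]
      exact quad_lb _ hM a u
    · have hfe : Fu xbar = Fu xhat := by rw [hB, hB]
      rw [hfe]; exact hbdd2
  refine ⟨⟨hL, hγs, hc0, hb0, ha0, hbdd1, hbdd2'⟩, ?_⟩
  rintro c ⟨u, hu, β, α, hEc, hβc, hαc, rfl⟩
  set xp : Fin n → ℝ := fx xbar + (Fu xbar) *ᵥ u with hxp
  have h1 : sInf {v : ℝ | ∃ xp' : Fin n → ℝ, v = -(ν ⬝ᵥ xp') + ∑ i, lama i * g i xp'}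
      ≤ -(ν ⬝ᵥ xp) + ∑ i, lama i * g i xp := csInf_le hbdd1 ⟨xp, rfl⟩
  have h2 : sInf {v : ℝ | ∃ u' ∈ Uset, v =
      (ν ⬝ᵥ (Fu xbar).mulVec u' + lamc ⬝ᵥ E.mulVec u' + ∑ j, lamb j * (r j ⬝ᵥ u'))
      + (1 / 2) * (u' ⬝ᵥ (∑ j, lamb j • R j).mulVec u')} ≤
      (ν ⬝ᵥ (Fu xbar).mulVec u + lamc ⬝ᵥ E.mulVec u + ∑ j, lamb j * (r j ⬝ᵥ u))
      + (1 / 2) * (u ⬝ᵥ (∑ j, lamb j • R j).mulVec u) := csInf_le hbdd2' ⟨u, hu, rfl⟩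
  have hA : ∑ i, lama i * g i xp ≤ γ * α := by
    calc ∑ i, lama i * g i xp ≤ ∑ i, lama i * α :=
          Finset.sum_le_sum fun i _ => mul_le_mul_of_nonneg_left (hαc i) (ha0 i)
      _ = γ * α := by rw [← Finset.sum_mul, hγs]
  have hB2 : lamc ⬝ᵥ E *ᵥ u ≤ lamc ⬝ᵥ hb xbar := by
    simp only [dotProduct]
    exact Finset.sum_le_sum fun cc _ => mul_le_mul_of_nonneg_left (hEc cc) (hc0 cc)
  have hquad : (1/2) * (u ⬝ᵥ (∑ j, lamb j • R j) *ᵥ u)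
      = ∑ j, lamb j * ((1/2) * (u ⬝ᵥ (R j) *ᵥ u)) := by
    rw [dot_sum_smul_mulVec, Finset.mul_sum]
    exact Finset.sum_congr rfl fun j _ => by ring
  have hC : ∑ j, lamb j * (φ j xbar + r j ⬝ᵥ u + (1/2) * (u ⬝ᵥ (R j) *ᵥ u)) ≤ ∑ k, β k := by
    calc ∑ j, lamb j * (φ j xbar + r j ⬝ᵥ u + (1/2) * (u ⬝ᵥ (R j) *ᵥ u))
        ≤ ∑ j, lamb j * β (kof j) :=
          Finset.sum_le_sum fun j _ => mul_le_mul_of_nonneg_left (hβc j) (hb0 j)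
      _ = ∑ k, ∑ j ∈ Finset.univ.filter (fun j => kof j = k), lamb j * β (kof j) :=
          (Finset.sum_fiberwise _ _ _).symm
      _ = ∑ k, β k := Finset.sum_congr rfl fun k _ => by
          rw [show (∑ j ∈ Finset.univ.filter (fun j => kof j = k), lamb j * β (kof j))
              = ∑ j ∈ Finset.univ.filter (fun j => kof j = k), lamb j * β k from
            Finset.sum_congr rfl fun j hj => by rw [(Finset.mem_filter.1 hj).2],
            ← Finset.sum_mul, hL k, one_mul]
  have hD : ν ⬝ᵥ xp = ν ⬝ᵥ fx xbar + ν ⬝ᵥ (Fu xbar) *ᵥ u := by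
    rw [hxp, dotProduct_add]
  have expand : ∑ j, lamb j * (φ j xbar + r j ⬝ᵥ u + (1/2) * (u ⬝ᵥ (R j) *ᵥ u))
      = (∑ j, lamb j * φ j xbar) + (∑ j, lamb j * (r j ⬝ᵥ u))
        + ∑ j, lamb j * ((1/2) * (u ⬝ᵥ (R j) *ᵥ u)) := by
    rw [← Finset.sum_add_distrib, ← Finset.sum_add_distrib]
    exact Finset.sum_congr rfl fun j _ => by ring
  unfold dualObj
  linarith [h1, h2, hA, hB2, hC, hD, hquad, expand]
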